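/- arXiv:1705.01965 — 4 statements merged into one kernel-verified Lean document; each statement's English description precedes it below -/
import Mathlib

section
/- Let machines have speeds s₁ ≤ s₂ with s₁ < s₂, let ℓ₁, ℓ₂ ≥ 0 be their current loads, let Λ > 0, and define the price π₂ = ℓ₁ - ℓ₂ + s₁·(1/s₁ - 1/s₂)·(2Λ - ℓ₁). Then for every job size p > 0, the inequality ℓ₁ + p/s₁ ≤ ℓ₂ + p/s₂ + π₂ holds if and only if ℓ₁ + p/s₁ ≤ 2Λ. -/
/-- Two related machines with speeds `s₁ < s₂`, loads `ℓ₁, ℓ₂ ≥ 0`, estimate `Λ > 0`,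
and price `π₂ = ℓ₁ - ℓ₂ + s₁·(1/s₁ - 1/s₂)·(2Λ - ℓ₁)` on the fast machine.
For every job size `p > 0`, the job weakly prefers machine 1 iff machine 1 is feasible. -/
theorem two_machine_price_iff
    (s₁ s₂ ℓ₁ ℓ₂ Λ π₂ : ℝ)
    (hs₁ : 0 < s₁) (hs : s₁ < s₂)
    (hℓ₁ : 0 ≤ ℓ₁) (hℓ₂ : 0 ≤ ℓ₂) (hΛ : 0 < Λ)
    (hπ : π₂ = ℓ₁ - ℓ₂ + s₁ * (1 / s₁ - 1 / s₂) * (2 * Λ - ℓ₁)) :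
    ∀ p : ℝ, 0 < p →
      (ℓ₁ + p / s₁ ≤ ℓ₂ + p / s₂ + π₂ ↔ ℓ₁ + p / s₁ ≤ 2 * Λ) := by
  intro p hp
  have hs₂ : 0 < s₂ := hs₁.trans hs
  have hd : 0 < 1 / s₁ - 1 / s₂ := by
    have := one_div_lt_one_div_of_lt hs₁ hs
    linarith
  subst hπ
  constructor <;> intro h
  · have key : p * (1 / s₁ - 1 / s₂) ≤ s₁ * (1 / s₁ - 1 / s₂) * (2 * Λ - ℓ₁) := by
      have : p / s₁ - p / s₂ = p * (1 / s₁ - 1 / s₂) := by ring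
      nlinarith [h]
    have h2 : p ≤ s₁ * (2 * Λ - ℓ₁) := by
      have := (mul_le_mul_iff_of_pos_right hd).mp (by nlinarith [key] : p * (1 / s₁ - 1 / s₂) ≤ (s₁ * (2 * Λ - ℓ₁)) * (1 / s₁ - 1 / s₂))
      exact this
    have : p / s₁ ≤ 2 * Λ - ℓ₁ := by
      rw [div_le_iff₀ hs₁]; nlinarith
    linarith
  · have h1 : p / s₁ ≤ 2 * Λ - ℓ₁ := by linarith
    have h2 : p ≤ s₁ * (2 * Λ - ℓ₁) := by
      rw [div_le_iff₀ hs₁] at h1; linarith [h1]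
    have key : p * (1 / s₁ - 1 / s₂) ≤ s₁ * (2 * Λ - ℓ₁) * (1 / s₁ - 1 / s₂) :=
      mul_le_mul_of_nonneg_right h2 hd.le
    have : p / s₁ - p / s₂ = p * (1 / s₁ - 1 / s₂) := by ring
    nlinarith [key]
end

section
/- Let Λ > 0, ε > 0, p > 0, and s > 0 with p/s ≤ L* ≤ Λ for some L* > 0. If Λ' = max{2, 2^{⌈log₂(p/(s·Λ_prev))⌉}}·Λ_prev where Λ_prev < L*, then Λ' ≤ 2·L*. -/
/-- If `Λ_prev < L*`, `p/s ≤ L* ≤ Λ`, and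
`Λ' = max{2, 2^{⌈log₂(p/(s·Λ_prev))⌉}}·Λ_prev`, then `Λ' ≤ 2·L*`. -/
theorem final_estimate_bound
    (Λ ε p s Lstar Λprev Λ' : ℝ)
    (hΛ : 0 < Λ) (hε : 0 < ε) (hp : 0 < p) (hs : 0 < s) (hL : 0 < Lstar)
    (hps : p / s ≤ Lstar) (hLΛ : Lstar ≤ Λ)
    (hprev_pos : 0 < Λprev) (hprev : Λprev < Lstar)
    (hΛ' : Λ' = max 2 ((2 : ℝ) ^ (⌈Real.logb 2 (p / (s * Λprev))⌉ : ℤ)) * Λprev) :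
    Λ' ≤ 2 * Lstar := by
  subst hΛ'
  set x : ℝ := Real.logb 2 (p / (s * Λprev)) with hx
  have hy : 0 < p / (s * Λprev) := div_pos hp (mul_pos hs hprev_pos)
  rcases le_total ((2 : ℝ) ^ (⌈x⌉ : ℤ)) 2 with h | h
  · rw [max_eq_left h]
    nlinarith
  · rw [max_eq_right h]
    -- 2^⌈x⌉ ≤ 2^(x+1) = 2 * (p/(s*Λprev))
    have h1 : ((2 : ℝ) ^ (⌈x⌉ : ℤ)) = (2 : ℝ) ^ ((⌈x⌉ : ℤ) : ℝ) := by
      rw [Real.rpow_intCast]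
    have h2 : (2 : ℝ) ^ ((⌈x⌉ : ℤ) : ℝ) ≤ (2 : ℝ) ^ (x + 1) := by
      apply Real.rpow_le_rpow_of_exponent_le one_le_two
      have := Int.ceil_le_floor_add_one x
      have h3 : ((⌈x⌉ : ℤ) : ℝ) ≤ x + 1 := by
        calc ((⌈x⌉ : ℤ) : ℝ) ≤ ((⌊x⌋ + 1 : ℤ) : ℝ) := by exact_mod_cast this
          _ ≤ x + 1 := by push_cast; linarith [Int.floor_le x]
      exact h3
    have h4 : (2 : ℝ) ^ (x + 1) = 2 * (p / (s * Λprev)) := by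
      rw [Real.rpow_add (by norm_num), Real.rpow_one, hx,
        Real.rpow_logb (by norm_num) (by norm_num) hy]
      ring
    have h5 : (2 : ℝ) ^ (⌈x⌉ : ℤ) ≤ 2 * (p / (s * Λprev)) := by
      rw [h1]; linarith
    have h6 : (2 : ℝ) ^ (⌈x⌉ : ℤ) * Λprev ≤ 2 * (p / (s * Λprev)) * Λprev :=
      mul_le_mul_of_nonneg_right h5 hprev_pos.le
    have h7 : 2 * (p / (s * Λprev)) * Λprev = 2 * (p / s) := by
      field_simp
    rw [h7] at h6
    have : p / s ≤ Lstar := hps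
    linarith
end

section
/- Let s₁ < s₂ < ⋯ < s_k be strictly increasing positive speeds, with real loads ℓ₁,…,ℓ_k ≥ 0, virtual loads ℓ̂₁,…,ℓ̂_k ≥ 0, Λ > 0, ε > 0. Define prices recursively by π₁ = 0 and π_{b+1} = ℓ_b - ℓ_{b+1} + (1 - s_b/s_{b+1})·((2+ε)Λ - ℓ̂_b) + π_b. If a job of size p > 0 satisfies ℓ̂_b + p/s_b > (2+ε)Λ for every b < k (all slower machines are infeasible), then ℓ_k + p/s_k + π_k < ℓ_b + p/s_b + π_b for every b < k, i.e., the job strictly prefers the fastest machine. -/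
/-- If all slower machines are infeasible at threshold `(2+ε)Λ`, then under the
recursively-defined prices the job strictly prefers the fastest machine. -/
theorem fastest_machine_preferred
    (k : ℕ) (hk : 0 < k)
    (s ℓ ℓhat π : ℕ → ℝ)
    (hs_pos : ∀ b, b < k → 0 < s b)
    (hs_mono : ∀ b, b + 1 < k → s b < s (b + 1))
    (hℓ : ∀ b, b < k → 0 ≤ ℓ b) (hℓhat : ∀ b, b < k → 0 ≤ ℓhat b)
    (Λ ε : ℝ) (hΛ : 0 < Λ) (hε : 0 < ε)
    (hπ0 : π 0 = 0)
    (hπ : ∀ b, b + 1 < k →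
      π (b + 1) = ℓ b - ℓ (b + 1) + (1 - s b / s (b + 1)) * ((2 + ε) * Λ - ℓhat b) + π b)
    (p : ℝ) (hp : 0 < p)
    (hinfeas : ∀ b, b < k - 1 → (2 + ε) * Λ < ℓhat b + p / s b) :
    ∀ b, b < k - 1 →
      ℓ (k - 1) + p / s (k - 1) + π (k - 1) < ℓ b + p / s b + π b := by
  have step : ∀ b, b < k - 1 →
      ℓ (b + 1) + p / s (b + 1) + π (b + 1) < ℓ b + p / s b + π b := by
    intro b hb
    have hb1 : b + 1 < k := by omega
    have hbk : b < k := by omega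
    have hsb := hs_pos b hbk
    have hsb1 := hs_pos (b + 1) hb1
    have hmono := hs_mono b hb1
    rw [hπ b hb1]
    have hinf := hinfeas b hb
    have hα : 0 < 1 - s b / s (b + 1) := by
      have : s b / s (b + 1) < 1 := (div_lt_one hsb1).mpr hmono
      linarith
    have key : p / s b - p / s (b + 1) = (1 - s b / s (b + 1)) * (p / s b) := by
      field_simp
    have h1 : (1 - s b / s (b + 1)) * ((2 + ε) * Λ - ℓhat b)
        < (1 - s b / s (b + 1)) * (p / s b) := by
      apply mul_lt_mul_of_pos_left _ hα
      linarith
    linarith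
  have main : ∀ n b, b + n = k - 1 → 0 < n →
      ℓ (k - 1) + p / s (k - 1) + π (k - 1) < ℓ b + p / s b + π b := by
    intro n
    induction n with
    | zero => intro b _ h; omega
    | succ m ih =>
      intro b hbn _
      have hb : b < k - 1 := by omega
      rcases Nat.eq_zero_or_pos m with hm | hm
      · have : b + 1 = k - 1 := by omega
        rw [← this]
        exact step b hb
      · exact lt_trans (ih (b + 1) (by omega) hm) (step b hb)
  intro b hb
  exact main (k - 1 - b) b (by omega) (by omega)
end

section
/- In the identical machines model with prices sorted as π_{i₁} ≤ π_{i₂} ≤ ⋯ ≤ π_{i_m} and π_max = π_{i_m}, the sequence of jobs p_j = π_max − π_{i_j} for j = 1,…,m (introduced in order), with agent j choosing a machine minimizing current load plus processing time plus price, results in job j choosing machine i_j for each j; afterwards every machine i satisfies ℓ_i + π_i = π_max. -/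
/-- Flattening construction for identical machines: with prices sorted increasingly and
jobs `p_j = π_max − π_j` arriving in order, job `j` (weakly) minimizes its cost on
machine `j`, and afterwards every machine `i` satisfies `ℓ_i + π_i = π_max`. -/
theorem identical_flattening
    (m : ℕ) (hm : 0 < m) (π : Fin m → ℝ) (hmono : Monotone π)
    (πmax : ℝ) (hπmax : πmax = π ⟨m - 1, by omega⟩)
    (p : Fin m → ℝ) (hp : ∀ j, p j = πmax - π j)
    (ℓ : Fin m → Fin m → ℝ)  -- ℓ j i = load of machine i just before job j arrives
    (hℓ : ∀ j i : Fin m, ℓ j i = if i < j then p i else 0) :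
    (∀ j i : Fin m, ℓ j j + p j + π j ≤ ℓ j i + p j + π i) ∧
    (∀ i : Fin m, p i + π i = πmax) := by
  have hmax : ∀ i : Fin m, π i ≤ πmax := by
    intro i
    rw [hπmax]
    exact hmono (show i ≤ ⟨m - 1, by omega⟩ by rw [Fin.le_def]; have := i.isLt; simp; omega)
  constructor
  · intro j i
    have hjj : ℓ j j = 0 := by rw [hℓ]; simp
    rw [hjj, hℓ]
    by_cases h : i < j
    · simp only [h, if_pos]
      have : π j ≤ p i + π i := by rw [hp]; linarith [hmax j]
      linarith
    · simp only [h, if_neg, not_false_iff]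
      have : π j ≤ π i := hmono (le_of_not_gt h)
      linarith
  · intro i
    rw [hp]; ring
end
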